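/- arXiv:2509.10666 — 2 statements merged into one kernel-verified Lean document; each statement's English description precedes it below -/
import Mathlib

section
/- For all real β > 0 and M > 0, the second-order derivative of A(M) = M·(1 − e^{−β/M})/β with respect to M equals −(β/M³)·e^{−β/M}, and this second derivative is strictly negative; hence A is strictly concave on (0, ∞). -/
open Real Set Filter

section Aux

variable (β : ℝ)

private noncomputable def gAux (β : ℝ) : ℝ → ℝ :=
  fun M => (1 - Real.exp (-β / M) - (β / M) * Real.exp (-β / M)) / β

private lemma hasDerivAt_f (hβ : 0 < β) {M : ℝ} (hM : 0 < M) :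
    HasDerivAt (fun M : ℝ => M * (1 - Real.exp (-β / M)) / β) (gAux β M) M := by
  have hM0 : M ≠ 0 := hM.ne'
  have hu : HasDerivAt (fun x : ℝ => -β / x) (β / M ^ 2) M := by
    have h1 : HasDerivAt (fun x : ℝ => -β * x⁻¹) ((-β) * (-(M ^ 2)⁻¹)) M :=
      (hasDerivAt_inv hM0).const_mul (-β)
    refine h1.congr_deriv ?_
    ring
  have he : HasDerivAt (fun x : ℝ => Real.exp (-β / x))
      (Real.exp (-β / M) * (β / M ^ 2)) M := hu.exp
  have hmain : HasDerivAt (fun x : ℝ => x * (1 - Real.exp (-β / x)))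
      (1 * (1 - Real.exp (-β / M)) + M * (0 - Real.exp (-β / M) * (β / M ^ 2))) M :=
    (hasDerivAt_id M).mul ((hasDerivAt_const M 1).sub he)
  have h2 := hmain.div_const β
  refine h2.congr_deriv ?_
  unfold gAux
  field_simp
  ring

private lemma hasDerivAt_g (hβ : 0 < β) {M : ℝ} (hM : 0 < M) :
    HasDerivAt (gAux β) (-(β / M ^ 3) * Real.exp (-β / M)) M := by
  have hM0 : M ≠ 0 := hM.ne'
  have hu : HasDerivAt (fun x : ℝ => -β / x) (β / M ^ 2) M := by
    have h1 : HasDerivAt (fun x : ℝ => -β * x⁻¹) ((-β) * (-(M ^ 2)⁻¹)) M :=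
      (hasDerivAt_inv hM0).const_mul (-β)
    refine h1.congr_deriv ?_
    ring
  have hv : HasDerivAt (fun x : ℝ => β / x) (-(β / M ^ 2)) M := by
    have h1 : HasDerivAt (fun x : ℝ => β * x⁻¹) (β * (-(M ^ 2)⁻¹)) M :=
      (hasDerivAt_inv hM0).const_mul β
    refine h1.congr_deriv ?_
    ring
  have he : HasDerivAt (fun x : ℝ => Real.exp (-β / x))
      (Real.exp (-β / M) * (β / M ^ 2)) M := hu.exp
  have hprod : HasDerivAt (fun x : ℝ => (β / x) * Real.exp (-β / x))
      (-(β / M ^ 2) * Real.exp (-β / M) + (β / M) * (Real.exp (-β / M) * (β / M ^ 2))) M :=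
    hv.mul he
  have hsum : HasDerivAt
      (fun x : ℝ => 1 - Real.exp (-β / x) - (β / x) * Real.exp (-β / x))
      ((0 - Real.exp (-β / M) * (β / M ^ 2)) -
        (-(β / M ^ 2) * Real.exp (-β / M) + (β / M) * (Real.exp (-β / M) * (β / M ^ 2)))) M :=
    ((hasDerivAt_const M 1).sub he).sub hprod
  have h2 := hsum.div_const β
  have : HasDerivAt (gAux β)
      (((0 - Real.exp (-β / M) * (β / M ^ 2)) -
        (-(β / M ^ 2) * Real.exp (-β / M) + (β / M) * (Real.exp (-β / M) * (β / M ^ 2)))) / β) M := h2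
  convert this using 1
  field_simp
  ring

private lemma deriv2_eq (hβ : 0 < β) {M : ℝ} (hM : 0 < M) :
    deriv (deriv (fun M : ℝ => M * (1 - Real.exp (-β / M)) / β)) M
      = -(β / M ^ 3) * Real.exp (-β / M) := by
  have hev : deriv (fun M : ℝ => M * (1 - Real.exp (-β / M)) / β) =ᶠ[nhds M] gAux β := by
    filter_upwards [Ioi_mem_nhds hM] with x hx using (hasDerivAt_f β hβ hx).deriv
  rw [hev.deriv_eq]
  exact (hasDerivAt_g β hβ hM).deriv

end Aux

/-- For all real β > 0 and M > 0, the second-order derivative of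
A(M) = M·(1 − e^{−β/M})/β with respect to M equals −(β/M³)·e^{−β/M}, and this
second derivative is strictly negative; hence A is strictly concave on (0, ∞). -/
theorem stmt_1 (β : ℝ) (hβ : 0 < β) :
    (∀ M : ℝ, 0 < M →
      deriv (deriv (fun M : ℝ => M * (1 - Real.exp (-β / M)) / β)) M
        = -(β / M ^ 3) * Real.exp (-β / M) ∧
      -(β / M ^ 3) * Real.exp (-β / M) < 0) ∧
    StrictConcaveOn ℝ (Set.Ioi (0 : ℝ))
      (fun M : ℝ => M * (1 - Real.exp (-β / M)) / β) := by
  have hneg : ∀ M : ℝ, 0 < M → -(β / M ^ 3) * Real.exp (-β / M) < 0 := by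
    intro M hM
    have := mul_pos (div_pos hβ (pow_pos hM 3)) (Real.exp_pos (-β / M))
    linarith
  constructor
  · intro M hM
    exact ⟨deriv2_eq β hβ hM, hneg M hM⟩
  · apply strictConcaveOn_of_deriv2_neg (convex_Ioi 0)
    · intro x hx
      exact (hasDerivAt_f β hβ hx).differentiableAt.continuousAt.continuousWithinAt
    · intro x hx
      rw [interior_Ioi] at hx
      have h := deriv2_eq β hβ hx
      simp only [Function.iterate_succ, Function.iterate_zero, Function.comp_apply, id_eq]
      rw [h]
      exact hneg x hx
end

section
/- Fix a real M > 1. The ratio R(β) = M·(1 − e^{−β/M})/(1 − e^{−β}) of the average in-waveguide propagation gain of the SS-based SWAN to that of the conventional single-waveguide PASS is strictly increasing in β on (0, ∞); equivalently, ∂/∂D_x (A_SS/A) > 0, so the gain improvement grows with the size of the service region. -/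
open Real Set Filter

lemma core_ineq (M : ℝ) (hM : 1 < M) {β : ℝ} (hβ : 0 < β) :
    M * (Real.exp (β / M) - 1) < Real.exp β - 1 := by
  have hM0 : (0 : ℝ) < M := lt_trans one_pos hM
  set s := Real.exp (β / M) - 1 with hs
  have hspos : 0 < s := by
    have h1 : 1 < Real.exp (β / M) := by
      rw [← Real.exp_zero]
      exact Real.exp_lt_exp.mpr (div_pos hβ hM0)
    rw [hs]; linarith
  have h := one_add_mul_self_lt_rpow_one_add (by linarith : (-1:ℝ) ≤ s) (ne_of_gt hspos) hM
  have h1s : (1 : ℝ) + s = Real.exp (β / M) := by ring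
  have hrpow : (1 + s) ^ M = Real.exp β := by
    rw [h1s, ← Real.exp_log (Real.exp_pos (β / M)), Real.log_exp, ← Real.exp_mul,
      div_mul_cancel₀ _ (ne_of_gt hM0)]
  linarith [h, hrpow ▸ h]

/-- Fix a real M > 1. The ratio R(β) = M·(1 − e^{−β/M})/(1 − e^{−β})
of the average in-waveguide propagation gain of the SS-based SWAN to that of the
conventional single-waveguide PASS is strictly increasing in β on (0, ∞). -/
theorem stmt_4 (M : ℝ) (hM : 1 < M) :
    StrictMonoOn (fun β : ℝ => M * (1 - Real.exp (-β / M)) / (1 - Real.exp (-β)))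
      (Set.Ioi (0 : ℝ)) := by
  have hM0 : (0 : ℝ) < M := lt_trans one_pos hM
  have hdenom : ∀ x ∈ Set.Ioi (0:ℝ), 1 - Real.exp (-x) ≠ 0 := by
    intro x hx
    have : Real.exp (-x) < 1 := Real.exp_lt_one_iff.mpr (by simpa using hx)
    linarith
  have hderiv : ∀ x ∈ Set.Ioi (0:ℝ), HasDerivAt
      (fun β : ℝ => M * (1 - Real.exp (-β / M)) / (1 - Real.exp (-β)))
      ((Real.exp (-x / M) * (1 - Real.exp (-x)) -
        M * (1 - Real.exp (-x / M)) * Real.exp (-x)) / (1 - Real.exp (-x)) ^ 2) x := by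
    intro x hx
    have hN : HasDerivAt (fun β : ℝ => M * (1 - Real.exp (-β / M))) (Real.exp (-x / M)) x := by
      have h1 : HasDerivAt (fun β : ℝ => -β / M) (-1 / M) x := by
        simpa using ((hasDerivAt_id x).neg.div_const M)
      have h2 : HasDerivAt (fun β : ℝ => Real.exp (-β / M)) (Real.exp (-x / M) * (-1 / M)) x :=
        h1.exp
      have := (h2.const_sub (1:ℝ)).const_mul M
      refine this.congr_deriv ?_
      field_simp
    have hD : HasDerivAt (fun β : ℝ => 1 - Real.exp (-β)) (Real.exp (-x)) x := by
      have h2 : HasDerivAt (fun β : ℝ => Real.exp (-β)) (Real.exp (-x) * (-1)) x :=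
        (Real.hasDerivAt_exp (-x)).comp x ((hasDerivAt_id x).neg)
      have := h2.const_sub (1:ℝ)
      refine this.congr_deriv ?_; ring
    exact hN.div hD (hdenom x hx)
  apply strictMonoOn_of_deriv_pos (convex_Ioi 0)
  · exact fun x hx => ((hderiv x hx).continuousAt).continuousWithinAt
  · intro x hx
    rw [interior_Ioi] at hx
    rw [(hderiv x hx).deriv]
    apply div_pos
    · -- numerator positivity
      have hx0 : (0:ℝ) < x := hx
      have key := core_ineq M hM hx0
      -- Multiply key by exp(-x - x/M) > 0 to get the claim
      have A : Real.exp (-x - x / M) * Real.exp x = Real.exp (-x / M) := by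
        rw [← Real.exp_add]; congr 1; ring
      have B : Real.exp (-x / M) * Real.exp (-x) = Real.exp (-x - x / M) := by
        rw [← Real.exp_add]; congr 1; ring
      have C : Real.exp (-x - x / M) * Real.exp (x / M) = Real.exp (-x) := by
        rw [← Real.exp_add]; congr 1; ring
      have e1 : Real.exp (-x / M) * (1 - Real.exp (-x)) =
          Real.exp (-x - x / M) * (Real.exp x - 1) := by
        linear_combination -B - A
      have e2 : M * (1 - Real.exp (-x / M)) * Real.exp (-x) =
          Real.exp (-x - x / M) * (M * (Real.exp (x / M) - 1)) := by
        linear_combination -M * B - M * C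
      rw [e1, e2]
      have hexppos : 0 < Real.exp (-x - x / M) := Real.exp_pos _
      nlinarith [key, hexppos]
    · have := hdenom x hx
      have h1 : Real.exp (-x) < 1 := Real.exp_lt_one_iff.mpr (by simpa using hx)
      positivity
end
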